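/- Let G be a 2-edge-colored graph with red subgraph R and blue subgraph B, let Y be a vertex set and X₁^b, …, X_h^b subsets of a set X disjoint from Y. Suppose G has no monochromatic triangle with two vertices in X and one in Y, and each X_i^b = {x ∈ X : x u_i ∈ E(B)} for some u_i ∈ Y. Then for every y ∈ Y and every i, |N_R(y) ∩ X_i^b| < α(G) + 1, and hence |N_R(y) ∩ ⋃ᵢ X_i^b| ≤ h·α(G), and summing over y ∈ Y gives |E(⋃ᵢ X_i^b, Y) ∩ E(R)| ≤ |Y|·h·α(G). -/

import Mathlib

open Finset
open scoped Classical

/-- The independence number of a graph: the largest size of an independent set. -/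
noncomputable def indepNum {V : Type*} [Fintype V] (G : SimpleGraph V) : ℕ :=
  sSup {n | ∃ s : Finset V, (∀ u ∈ s, ∀ v ∈ s, ¬ G.Adj u v) ∧ s.card = n}

lemma card_le_indepNum {V : Type*} [Fintype V] (G : SimpleGraph V)
    (s : Finset V) (hs : ∀ u ∈ s, ∀ v ∈ s, ¬ G.Adj u v) : s.card ≤ indepNum G := by
  apply le_csSup
  · refine ⟨Fintype.card V, ?_⟩
    rintro n ⟨t, -, rfl⟩
    exact t.card_le_univ.trans_eq (by simp)
  · exact ⟨s, hs, rfl⟩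

theorem stmt13 {V : Type*} [Fintype V] [DecidableEq V]
    (G R B : SimpleGraph V) (h : ℕ)
    (hR : R ≤ G) (hB : B ≤ G)
    (hdisjc : ∀ u v, ¬(R.Adj u v ∧ B.Adj u v))
    (hcov : ∀ u v, G.Adj u v → R.Adj u v ∨ B.Adj u v)
    (X Y : Finset V) (hXY : Disjoint X Y)
    (u : Fin h → V) (hu : ∀ i, u i ∈ Y)
    (Xb : Fin h → Finset V)
    (hXb : ∀ i, Xb i = X.filter fun x => B.Adj x (u i))
    (hnoMono : ∀ x₁ ∈ X, ∀ x₂ ∈ X, ∀ y ∈ Y, x₁ ≠ x₂ →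
      ¬((R.Adj x₁ x₂ ∧ R.Adj x₁ y ∧ R.Adj x₂ y) ∨
        (B.Adj x₁ x₂ ∧ B.Adj x₁ y ∧ B.Adj x₂ y))) :
    (∀ y ∈ Y, ∀ i, (R.neighborFinset y ∩ Xb i).card < indepNum G + 1) ∧
    (∀ y ∈ Y, (R.neighborFinset y ∩ Finset.univ.biUnion Xb).card ≤ h * indepNum G) ∧
    (Rel.interedges R.Adj (Finset.univ.biUnion Xb) Y).card ≤ Y.card * h * indepNum G := by
  have key : ∀ y ∈ Y, ∀ i, (R.neighborFinset y ∩ Xb i).card ≤ indepNum G := by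
    intro y hy i
    apply card_le_indepNum
    intro a ha b hb hab
    simp only [mem_inter, SimpleGraph.mem_neighborFinset, hXb, mem_filter] at ha hb
    have hne : a ≠ b := fun e => G.irrefl (e ▸ hab)
    rcases hcov a b hab with hr | hbl
    · exact hnoMono a ha.2.1 b hb.2.1 y hy hne (Or.inl ⟨hr, ha.1.symm, hb.1.symm⟩)
    · exact hnoMono a ha.2.1 b hb.2.1 (u i) (hu i) hne (Or.inr ⟨hbl, ha.2.2, hb.2.2⟩)
  have key2 : ∀ y ∈ Y, (R.neighborFinset y ∩ Finset.univ.biUnion Xb).card ≤ h * indepNum G := by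
    intro y hy
    have : R.neighborFinset y ∩ Finset.univ.biUnion Xb
        = Finset.univ.biUnion (fun i => R.neighborFinset y ∩ Xb i) := by
      ext v; simp [and_or_left]
    rw [this]
    calc (Finset.univ.biUnion (fun i => R.neighborFinset y ∩ Xb i)).card
        ≤ ∑ i : Fin h, (R.neighborFinset y ∩ Xb i).card := card_biUnion_le
      _ ≤ ∑ _i : Fin h, indepNum G := Finset.sum_le_sum fun i _ => key y hy i
      _ = h * indepNum G := by simp [mul_comm]
  refine ⟨fun y hy i => Nat.lt_succ_of_le (key y hy i), key2, ?_⟩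
  have hfib : ∀ e ∈ Rel.interedges R.Adj (Finset.univ.biUnion Xb) Y, Prod.snd e ∈ Y := by
    rintro ⟨a, b⟩ he
    exact (Rel.mk_mem_interedges_iff.mp he).2.1
  rw [card_eq_sum_card_fiberwise hfib]
  calc ∑ y ∈ Y, ((Rel.interedges R.Adj (Finset.univ.biUnion Xb) Y).filter
        (fun e => Prod.snd e = y)).card
      ≤ ∑ y ∈ Y, h * indepNum G := by
        apply Finset.sum_le_sum
        intro y hy
        refine le_trans ?_ (key2 y hy)
        apply Finset.card_le_card_of_injOn Prod.fst
        · rintro ⟨a, b⟩ he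
          simp only [mem_coe, mem_filter] at he
          obtain ⟨he, rfl⟩ := he
          have := Rel.mk_mem_interedges_iff.mp he
          simp only [mem_coe, mem_inter, SimpleGraph.mem_neighborFinset]
          exact ⟨this.2.2.symm, this.1⟩
        · rintro ⟨a, b⟩ ha ⟨c, d⟩ hc hac
          simp only [mem_coe, mem_filter] at ha hc
          exact Prod.ext hac (ha.2.trans hc.2.symm)
      _ = Y.card * h * indepNum G := by rw [Finset.sum_const, smul_eq_mul, mul_assoc]
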